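/- Let η_n and η be elements of 𝓜₂. Then η_n d₂-converges to η if and only if ∫f dη_n → ∫f dη for every f ∈ C_{d₂}⁺(ℝ). -/

import Mathlib

open MeasureTheory Filter Set
open ENNReal

noncomputable section

/-- A point measure on `ℝ`: a Borel measure that takes values in `ℕ` on bounded Borel sets
(in particular it is locally finite). -/
def IsPointMeasure (η : Measure ℝ) : Prop :=
  ∀ B : Set ℝ, MeasurableSet B → Bornology.IsBounded B → ∃ n : ℕ, η B = n

/-- Membership in the space `𝓜₂`: a nonzero point measure, finite on `[0,∞)`, whose mass on
`[-m,-m+1]` grows subgaussianly. -/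
def MemM2 (η : Measure ℝ) : Prop :=
  IsPointMeasure η ∧ η ≠ 0 ∧ η (Set.Ici 0) < ⊤ ∧
    Tendsto (fun m : ℕ =>
        (1 / (m : ℝ) ^ 2) *
          Real.log (max ((η (Set.Icc (-(m:ℝ)) (-(m:ℝ) + 1))).toReal) 1))
      atTop (nhds 0)

/-- The supremum of the support of a point measure (the position of the maximal atom). -/
noncomputable def maxM (η : Measure ℝ) : ℝ := sSup {x : ℝ | η (Set.Ici x) ≠ 0}

/-- The functions `α_k` used in the definition of the metric `d₂`. -/
noncomputable def alphaF (k : ℕ) (x : ℝ) : ℝ :=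
  if x ≤ -1 then Real.exp (-x ^ 2 / (k:ℝ))
  else if x < 0 then -Real.exp (-1 / (k:ℝ)) * x
  else 0

/-- The class `C_{d₂}⁺(ℝ)` of nonnegative bounded continuous functions vanishing
subgaussianly fast at `-∞`. -/
def MemCd2 (f : ℝ → ℝ) : Prop :=
  Continuous f ∧ (∀ x, 0 ≤ f x) ∧ (∃ Cb : ℝ, ∀ x, f x ≤ Cb) ∧
    ∃ lam > (0:ℝ), ∃ C : ℝ, ∀ᶠ x in atBot, Real.exp (lam * x ^ 2) * f x ≤ C

/-- Vague convergence of measures on `ℝ`. -/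
def VagueTendsto (ηn : ℕ → Measure ℝ) (η : Measure ℝ) : Prop :=
  ∀ h : ℝ → ℝ, Continuous h → HasCompactSupport h → (∀ x, 0 ≤ h x) →
    Tendsto (fun n => ∫ x, h x ∂(ηn n)) atTop (nhds (∫ x, h x ∂η))

/-- `d₂`-convergence in `𝓜₂`: vague convergence, convergence of the maxima, and convergence
of the integrals of the functions `α_k`. -/
def D2Tendsto (ηn : ℕ → Measure ℝ) (η : Measure ℝ) : Prop :=
  VagueTendsto ηn η ∧
    Tendsto (fun n => maxM (ηn n)) atTop (nhds (maxM η)) ∧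
    ∀ k : ℕ, 1 ≤ k →
      Tendsto (fun n => ∫ x, alphaF k x ∂(ηn n)) atTop (nhds (∫ x, alphaF k x ∂η))

-- L1
lemma pm_bounded_lt_top {η : Measure ℝ} (hη : IsPointMeasure η) {B : Set ℝ}
    (hB : MeasurableSet B) (hb : Bornology.IsBounded B) : η B < ⊤ := by
  obtain ⟨n, hn⟩ := hη B hB hb
  simp [hn]

lemma pm_Icc_lt_top {η : Measure ℝ} (hη : IsPointMeasure η) (a b : ℝ) : η (Icc a b) < ⊤ :=
  pm_bounded_lt_top hη measurableSet_Icc (Metric.isBounded_Icc _ _)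

-- L2
lemma m2_Ici_lt_top {η : Measure ℝ} (hη : MemM2 η) (x : ℝ) : η (Ici x) < ⊤ := by
  have hsub : Ici x ⊆ Ico x 0 ∪ Ici 0 := by
    intro y hy
    rcases lt_or_ge y 0 with h | h
    · exact Or.inl ⟨hy, h⟩
    · exact Or.inr h
  calc η (Ici x) ≤ η (Ico x 0) + η (Ici 0) :=
        le_trans (measure_mono hsub) (measure_union_le _ _)
    _ < ⊤ := ENNReal.add_lt_top.2
        ⟨pm_bounded_lt_top hη.1 measurableSet_Ico (Metric.isBounded_Ico x 0), hη.2.2.1⟩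

-- L3
lemma pm_Ici_eq_zero_of_lt_one {η : Measure ℝ} (hη : IsPointMeasure η) {x : ℝ}
    (h : η (Ici x) < 1) : η (Ici x) = 0 := by
  have hU : Ici x = ⋃ n : ℕ, Icc x (x + n) := by
    ext y
    simp only [mem_Ici, mem_iUnion, mem_Icc]
    constructor
    · intro hy
      exact ⟨⌈y - x⌉₊, hy, by linarith [Nat.le_ceil (y - x)]⟩
    · rintro ⟨n, h1, _⟩; exact h1
  rw [hU]
  refine measure_iUnion_null fun n => ?_
  obtain ⟨m, hm⟩ := hη _ measurableSet_Icc (Metric.isBounded_Icc _ _)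
  have : η (Icc x (x + n)) ≤ η (Ici x) := measure_mono (by
    intro y hy; exact hy.1)
  rw [hm] at this ⊢
  have : (m : ℝ≥0∞) < 1 := lt_of_le_of_lt this h
  norm_cast at this ⊢
  omega

lemma pm_one_le_Ici {η : Measure ℝ} (hη : IsPointMeasure η) {x : ℝ}
    (h : η (Ici x) ≠ 0) : 1 ≤ η (Ici x) := by
  by_contra hc
  exact h (pm_Ici_eq_zero_of_lt_one hη (lt_of_not_ge hc))

-- S nonempty
lemma m2_S_nonempty {η : Measure ℝ} (hη : MemM2 η) :
    {x : ℝ | η (Ici x) ≠ 0}.Nonempty := by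
  by_contra hc
  rw [not_nonempty_iff_eq_empty] at hc
  have hall : ∀ n : ℕ, η (Ici (-(n:ℝ))) = 0 := by
    intro n
    by_contra h
    have hmem : -(n:ℝ) ∈ {x : ℝ | η (Ici x) ≠ 0} := h
    rw [hc] at hmem
    exact hmem
  have huniv : (univ : Set ℝ) = ⋃ n : ℕ, Ici (-(n:ℝ)) := by
    ext y
    simp only [mem_univ, mem_iUnion, mem_Ici, true_iff]
    obtain ⟨n, hn⟩ := exists_nat_ge (-y)
    exact ⟨n, by linarith⟩
  have : η univ = 0 := by
    rw [huniv]; exact measure_iUnion_null hall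
  exact hη.2.1 (Measure.measure_univ_eq_zero.1 this)

-- exists vanishing Ici
lemma m2_exists_Ici_zero {η : Measure ℝ} (hη : MemM2 η) :
    ∃ a : ℝ, η (Ici a) = 0 := by
  have htend : Tendsto (fun n : ℕ => η (Ici (n:ℝ))) atTop (nhds (η (⋂ n : ℕ, Ici (n:ℝ)))) := by
    have := tendsto_measure_iInter_atTop (μ := η) (s := fun n : ℕ => Ici (n:ℝ))
      (fun n => measurableSet_Ici.nullMeasurableSet)
      (fun a b hab => Ici_subset_Ici.2 (by exact_mod_cast hab))
      ⟨0, by simpa using (m2_Ici_lt_top hη 0).ne⟩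
    exact this
  have hempty : (⋂ n : ℕ, Ici ((n:ℝ))) = ∅ := by
    ext y
    simp only [mem_iInter, mem_Ici, mem_empty_iff_false, iff_false, not_forall, not_le]
    obtain ⟨n, hn⟩ := exists_nat_gt y
    exact ⟨n, hn⟩
  rw [hempty, measure_empty] at htend
  have := Filter.Tendsto.eventually_lt_const (by norm_num : (0:ℝ≥0∞) < 1) htend
  obtain ⟨n, hn⟩ := this.exists
  exact ⟨n, pm_Ici_eq_zero_of_lt_one hη.1 hn⟩

lemma m2_S_bddAbove {η : Measure ℝ} (hη : MemM2 η) :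
    BddAbove {x : ℝ | η (Ici x) ≠ 0} := by
  obtain ⟨a, ha⟩ := m2_exists_Ici_zero hη
  refine ⟨a, fun x hx => ?_⟩
  by_contra hc
  push_neg at hc
  exact hx (measure_mono_null (Ici_subset_Ici.2 hc.le) ha)

lemma m2_Ici_zero_of_gt {η : Measure ℝ} (hη : MemM2 η) {x : ℝ} (hx : maxM η < x) :
    η (Ici x) = 0 := by
  by_contra h
  exact absurd (le_csSup (m2_S_bddAbove hη) (h : x ∈ {x : ℝ | η (Ici x) ≠ 0})) (not_le.2 hx)

lemma m2_one_le_Ici_of_lt {η : Measure ℝ} (hη : MemM2 η) {x : ℝ} (hx : x < maxM η) :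
    1 ≤ η (Ici x) := by
  obtain ⟨y, hy, hxy⟩ := exists_lt_of_lt_csSup (m2_S_nonempty hη) hx
  refine pm_one_le_Ici hη.1 fun h0 => ?_
  exact hy (measure_mono_null (Ici_subset_Ici.2 hxy.le) h0)

lemma m2_Ioi_maxM_zero {η : Measure ℝ} (hη : MemM2 η) : η (Ioi (maxM η)) = 0 := by
  have hU : Ioi (maxM η) = ⋃ n : ℕ, Ici (maxM η + 1/((n:ℝ)+1)) := by
    ext y
    simp only [mem_Ioi, mem_iUnion, mem_Ici]
    constructor
    · intro hy
      obtain ⟨n, hn⟩ := exists_nat_one_div_lt (sub_pos.2 hy)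
      exact ⟨n, by linarith⟩
    · rintro ⟨n, hn⟩
      have : 0 < 1/((n:ℝ)+1) := by positivity
      linarith
  rw [hU]
  refine measure_iUnion_null fun n => m2_Ici_zero_of_gt hη ?_
  have : 0 < 1/((n:ℝ)+1) := by positivity
  linarith


-- growth lemma
lemma m2_growth {η : Measure ℝ} (hη : MemM2 η) {ε : ℝ} (hε : 0 < ε) :
    ∀ᶠ m : ℕ in atTop,
      η (Icc (-(m:ℝ)) (-(m:ℝ)+1)) ≤ ENNReal.ofReal (Real.exp (ε * (m:ℝ)^2)) := by
  have h2 := Filter.Tendsto.eventually_lt_const hε hη.2.2.2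
  filter_upwards [h2, eventually_ge_atTop 1] with m hm hm1
  set t := (η (Icc (-(m:ℝ)) (-(m:ℝ)+1))).toReal with ht
  have hm2 : (0:ℝ) < (m:ℝ)^2 := by
    have : (1:ℝ) ≤ (m:ℝ) := by exact_mod_cast hm1
    positivity
  have key : (m:ℝ)^2 * ((1/(m:ℝ)^2) * Real.log (max t 1)) = Real.log (max t 1) := by
    field_simp
  have hlog : Real.log (max t 1) < ε * (m:ℝ)^2 := by
    have h3 := (mul_lt_mul_of_pos_left hm hm2)
    rw [key] at h3
    linarith [h3]
  have hmax : max t 1 < Real.exp (ε * (m:ℝ)^2) :=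
    (Real.log_lt_iff_lt_exp (by positivity)).1 hlog
  have htle : t ≤ Real.exp (ε * (m:ℝ)^2) := le_trans (le_max_left _ _) hmax.le
  exact (ENNReal.le_ofReal_iff_toReal_le (pm_Icc_lt_top hη.1 _ _).ne
    (Real.exp_nonneg _)).2 htle

lemma gauss_continuous (lam : ℝ) :
    Continuous (fun x : ℝ => Real.exp (-lam * x^2)) :=
  Real.continuous_exp.comp (continuous_const.mul (continuous_pow 2))

lemma gauss_measurable (lam : ℝ) :
    Measurable (fun x : ℝ => ENNReal.ofReal (Real.exp (-lam * x^2))) :=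
  ENNReal.measurable_ofReal.comp (gauss_continuous lam).measurable

lemma gauss_lintegral_lt_top {η : Measure ℝ} (hη : MemM2 η) {lam : ℝ} (hlam : 0 < lam) :
    ∫⁻ x, ENNReal.ofReal (Real.exp (-lam * x^2)) ∂η < ⊤ := by
  obtain ⟨m1, hm1⟩ := eventually_atTop.1 (m2_growth hη (by positivity : (0:ℝ) < lam/4))
  set m0 : ℕ := max m1 3 with hm0def
  have hm03 : (3:ℕ) ≤ m0 := le_max_right _ _
  have hm0 : ∀ m : ℕ, m0 ≤ m →
      η (Icc (-(m:ℝ)) (-(m:ℝ)+1)) ≤ ENNReal.ofReal (Real.exp (lam/4 * (m:ℝ)^2)) :=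
    fun m hm => hm1 m (le_trans (le_max_left _ _) hm)
  set g := fun x : ℝ => ENNReal.ofReal (Real.exp (-lam * x^2)) with hg
  have hgm : Measurable g := gauss_measurable lam
  set A : ℝ := max (maxM η) 0 + 1 with hA
  have hAmax : maxM η < A := by
    have := le_max_left (maxM η) 0
    simp only [hA]; linarith
  have hsplit : ∫⁻ x, g x ∂η ≤
      (∫⁻ x in Iic (-(m0:ℝ)), g x ∂η) + (∫⁻ x in Ioc (-(m0:ℝ)) A, g x ∂η)
        + (∫⁻ x in Ioi A, g x ∂η) := by
    have huniv : (univ : Set ℝ) ⊆ Iic (-(m0:ℝ)) ∪ Ioc (-(m0:ℝ)) A ∪ Ioi A := by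
      intro y _
      rcases le_or_gt y (-(m0:ℝ)) with h | h
      · exact Or.inl (Or.inl h)
      · rcases le_or_gt y A with h2 | h2
        · exact Or.inl (Or.inr ⟨h, h2⟩)
        · exact Or.inr h2
    calc ∫⁻ x, g x ∂η = ∫⁻ x in univ, g x ∂η := (setLIntegral_univ _).symm
      _ ≤ ∫⁻ x in (Iic (-(m0:ℝ)) ∪ Ioc (-(m0:ℝ)) A ∪ Ioi A), g x ∂η :=
          lintegral_mono_set huniv
      _ ≤ _ := le_trans (lintegral_union_le _ _ _)
          (add_le_add (lintegral_union_le _ _ _) le_rfl)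
  have hright : ∫⁻ x in Ioi A, g x ∂η = 0 :=
    setLIntegral_measure_zero _ _
      (measure_mono_null Ioi_subset_Ici_self (m2_Ici_zero_of_gt hη hAmax))
  have hmid : ∫⁻ x in Ioc (-(m0:ℝ)) A, g x ∂η < ⊤ := by
    calc ∫⁻ x in Ioc (-(m0:ℝ)) A, g x ∂η ≤ ∫⁻ _ in Ioc (-(m0:ℝ)) A, 1 ∂η := by
          refine lintegral_mono fun x => ?_
          exact ENNReal.ofReal_le_one.2 (Real.exp_le_one_iff.2 (by nlinarith [sq_nonneg x]))
      _ = η (Ioc (-(m0:ℝ)) A) := setLIntegral_one _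
      _ ≤ η (Icc (-(m0:ℝ)) A) := measure_mono Ioc_subset_Icc_self
      _ < ⊤ := pm_Icc_lt_top hη.1 _ _
  have hterm : ∀ i : ℕ,
      ∫⁻ x in Icc (-(m0:ℝ)-i-1) (-(m0:ℝ)-i), g x ∂η ≤
        ENNReal.ofReal (Real.exp (-lam)) ^ i := by
    intro i
    set c : ℝ≥0∞ := ENNReal.ofReal (Real.exp (-lam * ((m0:ℝ)+i)^2)) with hc
    have h1 : ∫⁻ x in Icc (-(m0:ℝ)-i-1) (-(m0:ℝ)-i), g x ∂η ≤
        c * η (Icc (-(m0:ℝ)-i-1) (-(m0:ℝ)-i)) := by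
      calc ∫⁻ x in Icc (-(m0:ℝ)-i-1) (-(m0:ℝ)-i), g x ∂η
          ≤ ∫⁻ _ in Icc (-(m0:ℝ)-i-1) (-(m0:ℝ)-i), c ∂η := by
            refine setLIntegral_mono measurable_const fun x hx => ?_
            refine ENNReal.ofReal_le_ofReal (Real.exp_le_exp.2 ?_)
            have hx2 : x ≤ -((m0:ℝ)+i) := by
              have := hx.2
              push_cast at this ⊢
              linarith
            have hnn : (0:ℝ) ≤ (m0:ℝ)+i := by positivity
            nlinarith [mul_nonneg (mul_nonneg hlam.le
              (by linarith : (0:ℝ) ≤ -(x + ((m0:ℝ)+i)))) (by linarith : (0:ℝ) ≤ -(x - ((m0:ℝ)+i)))]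
        _ = c * η (Icc (-(m0:ℝ)-i-1) (-(m0:ℝ)-i)) := setLIntegral_const _ _
    have h2 : η (Icc (-(m0:ℝ)-i-1) (-(m0:ℝ)-i)) ≤
        ENNReal.ofReal (Real.exp (lam/4 * ((m0:ℝ)+i+1)^2)) := by
      have h3 := hm0 (m0+i+1) (by omega)
      have e1 : (-(↑(m0+i+1):ℝ)) = -(m0:ℝ)-i-1 := by push_cast; ring
      have e2 : (-(↑(m0+i+1):ℝ)+1) = -(m0:ℝ)-i := by push_cast; ring
      have e3 : ((↑(m0+i+1):ℝ))^2 = ((m0:ℝ)+i+1)^2 := by push_cast; ring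
      rw [e2] at h3; rw [e1] at h3; rw [e3] at h3
      exact h3
    calc ∫⁻ x in Icc (-(m0:ℝ)-i-1) (-(m0:ℝ)-i), g x ∂η
        ≤ c * ENNReal.ofReal (Real.exp (lam/4 * ((m0:ℝ)+i+1)^2)) :=
          le_trans h1 (mul_le_mul' le_rfl h2)
      _ = ENNReal.ofReal (Real.exp (-lam * ((m0:ℝ)+i)^2 + lam/4 * ((m0:ℝ)+i+1)^2)) := by
          rw [hc, ← ENNReal.ofReal_mul (Real.exp_nonneg _), ← Real.exp_add]
      _ ≤ ENNReal.ofReal (Real.exp (-lam * (i:ℝ))) := by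
          refine ENNReal.ofReal_le_ofReal (Real.exp_le_exp.2 ?_)
          set j : ℝ := (m0:ℝ)+i with hj
          have hj3 : (3:ℝ) ≤ j := by
            have : (3:ℝ) ≤ (m0:ℝ) := by exact_mod_cast hm03
            have : (0:ℝ) ≤ (i:ℝ) := Nat.cast_nonneg i
            simp only [hj]; linarith
          have hji : (i:ℝ) + 3 ≤ j := by
            have : (3:ℝ) ≤ (m0:ℝ) := by exact_mod_cast hm03
            simp only [hj]; linarith
          clear_value j
          have hpoly : (0:ℝ) ≤ 3*j^2 - 2*j - 1 - 4*(i:ℝ) := by nlinarith [sq_nonneg (j-1)]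
          nlinarith [mul_nonneg hlam.le hpoly]
      _ = ENNReal.ofReal (Real.exp (-lam)) ^ i := by
          rw [show -lam * (i:ℝ) = (i:ℝ) * (-lam) by ring, Real.exp_nat_mul,
            ENNReal.ofReal_pow (Real.exp_nonneg _)]
  have hleft : ∫⁻ x in Iic (-(m0:ℝ)), g x ∂η < ⊤ := by
    have hcover : Iic (-(m0:ℝ)) ⊆ ⋃ i : ℕ, Icc (-(m0:ℝ)-i-1) (-(m0:ℝ)-i) := by
      intro x hx
      simp only [mem_iUnion, mem_Icc]
      set t : ℝ := -(m0:ℝ) - x with htdef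
      have ht0 : 0 ≤ t := by simp only [htdef]; linarith [mem_Iic.1 hx]
      refine ⟨⌊t⌋₊, ?_, ?_⟩
      · have := Nat.lt_floor_add_one t
        simp only [htdef] at this; linarith
      · have := Nat.floor_le ht0
        simp only [htdef] at this; linarith
    calc ∫⁻ x in Iic (-(m0:ℝ)), g x ∂η
        ≤ ∫⁻ x in ⋃ i : ℕ, Icc (-(m0:ℝ)-i-1) (-(m0:ℝ)-i), g x ∂η :=
          lintegral_mono_set hcover
      _ ≤ ∑' i : ℕ, ∫⁻ x in Icc (-(m0:ℝ)-i-1) (-(m0:ℝ)-i), g x ∂η :=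
          lintegral_iUnion_le _ _
      _ ≤ ∑' i : ℕ, ENNReal.ofReal (Real.exp (-lam)) ^ i := ENNReal.tsum_le_tsum hterm
      _ = (1 - ENNReal.ofReal (Real.exp (-lam)))⁻¹ := ENNReal.tsum_geometric _
      _ < ⊤ := by
          refine ENNReal.inv_lt_top.2 ?_
          rw [tsub_pos_iff_lt]
          exact ENNReal.ofReal_lt_one.2 (Real.exp_lt_one_iff.2 (by linarith))
  calc ∫⁻ x, g x ∂η ≤ _ := hsplit
    _ < ⊤ := by
        rw [hright, add_zero]
        exact ENNReal.add_lt_top.2 ⟨hleft, hmid⟩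


-- L8: integrability criterion
lemma integrable_of_m2 {η : Measure ℝ} (hη : MemM2 η) {f : ℝ → ℝ} (hc : Continuous f)
    (h0 : ∀ x, 0 ≤ f x) {Cb : ℝ} (hCb : ∀ x, f x ≤ Cb) {lam C M : ℝ} (hlam : 0 < lam)
    (htail : ∀ x, x ≤ -M → f x ≤ C * Real.exp (-lam * x^2)) : Integrable f η := by
  set M' : ℝ := max M 0 with hM'
  have hMM' : M ≤ M' := le_max_left _ _
  have hC0 : 0 ≤ C := by
    have h1 := htail (-M' - 1) (by linarith)
    have h2 := h0 (-M' - 1)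
    nlinarith [Real.exp_pos (-lam * (-M' - 1)^2)]
  refine ⟨hc.aestronglyMeasurable, ?_⟩
  rw [hasFiniteIntegral_iff_ofReal (Eventually.of_forall h0)]
  set A : ℝ := max (maxM η) (-M') + 1 with hA
  have hAmax : maxM η < A := by
    have := le_max_left (maxM η) (-M')
    simp only [hA]; linarith
  have hMA : -M' ≤ A := by
    have := le_max_right (maxM η) (-M')
    simp only [hA]; linarith
  set g := fun x : ℝ => ENNReal.ofReal (f x) with hg
  have hsplit : ∫⁻ x, g x ∂η ≤
      (∫⁻ x in Iic (-M'), g x ∂η) + (∫⁻ x in Ioc (-M') A, g x ∂η)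
        + (∫⁻ x in Ioi A, g x ∂η) := by
    have huniv : (univ : Set ℝ) ⊆ Iic (-M') ∪ Ioc (-M') A ∪ Ioi A := by
      intro y _
      rcases le_or_gt y (-M') with h | h
      · exact Or.inl (Or.inl h)
      · rcases le_or_gt y A with h2 | h2
        · exact Or.inl (Or.inr ⟨h, h2⟩)
        · exact Or.inr h2
    calc ∫⁻ x, g x ∂η = ∫⁻ x in univ, g x ∂η := (setLIntegral_univ _).symm
      _ ≤ ∫⁻ x in (Iic (-M') ∪ Ioc (-M') A ∪ Ioi A), g x ∂η := lintegral_mono_set huniv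
      _ ≤ _ := le_trans (lintegral_union_le _ _ _)
          (add_le_add (lintegral_union_le _ _ _) le_rfl)
  have hright : ∫⁻ x in Ioi A, g x ∂η = 0 :=
    setLIntegral_measure_zero _ _
      (measure_mono_null Ioi_subset_Ici_self (m2_Ici_zero_of_gt hη hAmax))
  have hmid : ∫⁻ x in Ioc (-M') A, g x ∂η < ⊤ := by
    calc ∫⁻ x in Ioc (-M') A, g x ∂η ≤ ∫⁻ _ in Ioc (-M') A, ENNReal.ofReal Cb ∂η :=
          lintegral_mono fun x => ENNReal.ofReal_le_ofReal (hCb x)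
      _ = ENNReal.ofReal Cb * η (Ioc (-M') A) := setLIntegral_const _ _
      _ ≤ ENNReal.ofReal Cb * η (Icc (-M') A) :=
          mul_le_mul' le_rfl (measure_mono Ioc_subset_Icc_self)
      _ < ⊤ := ENNReal.mul_lt_top ENNReal.ofReal_lt_top (pm_Icc_lt_top hη.1 _ _)
  have hleft : ∫⁻ x in Iic (-M'), g x ∂η < ⊤ := by
    calc ∫⁻ x in Iic (-M'), g x ∂η
        ≤ ∫⁻ x in Iic (-M'),
            ENNReal.ofReal C * ENNReal.ofReal (Real.exp (-lam * x^2)) ∂η := by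
          refine setLIntegral_mono (by fun_prop) fun x hx => ?_
          rw [← ENNReal.ofReal_mul hC0]
          exact ENNReal.ofReal_le_ofReal (htail x (le_trans (mem_Iic.1 hx) (by linarith)))
      _ ≤ ∫⁻ x, ENNReal.ofReal C * ENNReal.ofReal (Real.exp (-lam * x^2)) ∂η := by
          rw [← setLIntegral_univ (μ := η)
            (fun x => ENNReal.ofReal C * ENNReal.ofReal (Real.exp (-lam * x^2)))]
          exact lintegral_mono_set (subset_univ _)
      _ = ENNReal.ofReal C * ∫⁻ x, ENNReal.ofReal (Real.exp (-lam * x^2)) ∂η :=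
          lintegral_const_mul _ (gauss_measurable lam)
      _ < ⊤ := ENNReal.mul_lt_top ENNReal.ofReal_lt_top (gauss_lintegral_lt_top hη hlam)
  calc ∫⁻ x, g x ∂η ≤ _ := hsplit
    _ < ⊤ := by
        rw [hright, add_zero]
        exact ENNReal.add_lt_top.2 ⟨hleft, hmid⟩

-- indicator of Ici is integrable
lemma m2_integrable_indicator {η : Measure ℝ} (hη : MemM2 η) (c : ℝ) :
    Integrable ((Ici c).indicator fun _ => (1:ℝ)) η := by
  rw [integrable_indicator_iff measurableSet_Ici]
  exact integrableOn_const (m2_Ici_lt_top hη c).ne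

-- tail of an integral tends to 0
lemma m2_tendsto_tail {η : Measure ℝ} (hη : MemM2 η) {f : ℝ → ℝ} (hfi : Integrable f η) :
    Tendsto (fun R : ℕ => ∫ x in Iic (-(R:ℝ)), f x ∂η) atTop (nhds 0) := by
  have hU : (⋃ R : ℕ, Ioi (-(R:ℝ))) = univ := by
    ext y
    simp only [mem_iUnion, mem_Ioi, mem_univ, iff_true]
    obtain ⟨n, hn⟩ := exists_nat_gt (-y)
    exact ⟨n, by linarith⟩
  have h1 := tendsto_setIntegral_of_monotone (μ := η) (s := fun R : ℕ => Ioi (-(R:ℝ)))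
    (fun _ => measurableSet_Ioi)
    (fun a b hab => Ioi_subset_Ioi (by
      have : (a:ℝ) ≤ b := by exact_mod_cast hab
      linarith))
    (by rw [hU]; exact hfi.integrableOn)
  rw [hU] at h1
  simp only [Measure.restrict_univ] at h1
  have h2 : ∀ R : ℕ, ∫ x in Iic (-(R:ℝ)), f x ∂η =
      (∫ x, f x ∂η) - ∫ x in Ioi (-(R:ℝ)), f x ∂η := by
    intro R
    have h3 := integral_add_compl (measurableSet_Ioi (a := -(R:ℝ))) hfi
    rw [compl_Ioi] at h3
    linarith
  have h4 : Tendsto (fun R : ℕ => (∫ x, f x ∂η) - ∫ x in Ioi (-(R:ℝ)), f x ∂η)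
      atTop (nhds ((∫ x, f x ∂η) - ∫ x, f x ∂η)) := tendsto_const_nhds.sub h1
  rw [sub_self] at h4
  exact h4.congr fun R => (h2 R).symm



lemma alphaF_eq_min {k : ℕ} (hk : 1 ≤ k) (x : ℝ) :
    alphaF k x = min (Real.exp (-x^2/(k:ℝ))) (Real.exp (-1/(k:ℝ)) * max 0 (-x)) := by
  have hk0 : (0:ℝ) < k := by exact_mod_cast hk
  rcases le_or_gt x (-1) with h | h
  · rw [alphaF, if_pos h]
    have hmax : max 0 (-x) = -x := max_eq_right (by linarith)
    rw [hmax]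
    refine (min_eq_left ?_).symm
    have h1 : Real.exp (-x^2/(k:ℝ)) ≤ Real.exp (-1/(k:ℝ)) := by
      apply Real.exp_le_exp.2
      rw [div_le_div_iff_of_pos_right hk0]
      nlinarith
    have h2 : Real.exp (-1/(k:ℝ)) ≤ Real.exp (-1/(k:ℝ)) * (-x) := by
      nlinarith [Real.exp_pos (-1/(k:ℝ))]
    linarith
  · rcases lt_or_ge x 0 with h2 | h2
    · rw [alphaF, if_neg (by linarith), if_pos h2]
      have hmax : max 0 (-x) = -x := max_eq_right (by linarith)
      rw [hmax]
      have heq : -Real.exp (-1/(k:ℝ)) * x = Real.exp (-1/(k:ℝ)) * (-x) := by ring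
      rw [heq]
      refine (min_eq_right ?_).symm
      have h3 : Real.exp (-1/(k:ℝ)) * (-x) ≤ Real.exp (-1/(k:ℝ)) * 1 := by
        apply mul_le_mul_of_nonneg_left (by linarith) (Real.exp_nonneg _)
      have h4 : Real.exp (-1/(k:ℝ)) ≤ Real.exp (-x^2/(k:ℝ)) := by
        apply Real.exp_le_exp.2
        rw [div_le_div_iff_of_pos_right hk0]
        nlinarith
      linarith
    · rw [alphaF, if_neg (by linarith), if_neg (by linarith)]
      have hmax : max 0 (-x) = 0 := max_eq_left (by linarith)
      rw [hmax, mul_zero]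
      exact (min_eq_right (Real.exp_nonneg _)).symm

lemma alphaF_continuous {k : ℕ} (hk : 1 ≤ k) : Continuous (alphaF k) := by
  have : alphaF k = fun x =>
      min (Real.exp (-x^2/(k:ℝ))) (Real.exp (-1/(k:ℝ)) * max 0 (-x)) := by
    funext x; exact alphaF_eq_min hk x
  rw [this]
  exact ((Real.continuous_exp.comp ((continuous_pow 2).neg.div_const _)).min
    (continuous_const.mul (continuous_const.max continuous_neg)))

lemma alphaF_nonneg {k : ℕ} (hk : 1 ≤ k) (x : ℝ) : 0 ≤ alphaF k x := by
  rw [alphaF_eq_min hk]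
  exact le_min (Real.exp_nonneg _)
    (mul_nonneg (Real.exp_nonneg _) (le_max_left _ _))

lemma alphaF_le_one {k : ℕ} (hk : 1 ≤ k) (x : ℝ) : alphaF k x ≤ 1 := by
  have hk0 : (0:ℝ) < k := by exact_mod_cast hk
  rw [alphaF_eq_min hk]
  refine le_trans (min_le_left _ _) ?_
  apply Real.exp_le_one_iff.2
  have : 0 ≤ x^2/(k:ℝ) := by positivity
  rw [neg_div]
  linarith

lemma alphaF_of_le {k : ℕ} {x : ℝ} (h : x ≤ -1) :
    alphaF k x = Real.exp (-x ^ 2 / (k:ℝ)) := by rw [alphaF, if_pos h]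

lemma alphaF_integrable {η : Measure ℝ} (hη : MemM2 η) {k : ℕ} (hk : 1 ≤ k) :
    Integrable (alphaF k) η := by
  have hk0 : (0:ℝ) < k := by exact_mod_cast hk
  refine integrable_of_m2 hη (alphaF_continuous hk) (alphaF_nonneg hk)
    (alphaF_le_one hk) (lam := 1/(k:ℝ)) (C := 1) (M := 1) (by positivity) ?_
  intro x hx
  rw [alphaF_of_le hx, one_mul]
  apply le_of_eq
  congr 1
  field_simp



lemma m2_finiteOnCompacts {η : Measure ℝ} (hη : MemM2 η) : IsFiniteMeasureOnCompacts η :=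
  ⟨fun {K} hK => pm_bounded_lt_top hη.1 hK.isClosed.measurableSet hK.isBounded⟩

-- (a) compactly supported functions are in Cd2
lemma memCd2_of_compactSupport {h : ℝ → ℝ} (hc : Continuous h) (hs : HasCompactSupport h)
    (h0 : ∀ x, 0 ≤ h x) : MemCd2 h := by
  obtain ⟨Cb, hCb⟩ := hc.bounded_above_of_compact_support hs
  obtain ⟨R, hR⟩ := hs.isBounded.subset_closedBall 0
  refine ⟨hc, h0, ⟨Cb, fun x => le_trans (le_abs_self _) (by simpa [Real.norm_eq_abs] using hCb x)⟩, 1, one_pos, 0, ?_⟩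
  filter_upwards [eventually_lt_atBot (-R)] with x hx
  have hxn : x ∉ tsupport h := by
    intro hmem
    have := hR hmem
    rw [Metric.mem_closedBall, Real.dist_eq, sub_zero] at this
    have : -R ≤ x := by cases abs_le.1 this; linarith
    linarith
  rw [image_eq_zero_of_notMem_tsupport hxn, mul_zero]

-- (b) alphaF is in Cd2
lemma memCd2_alphaF {k : ℕ} (hk : 1 ≤ k) : MemCd2 (alphaF k) := by
  have hk0 : (0:ℝ) < k := by exact_mod_cast hk
  refine ⟨alphaF_continuous hk, alphaF_nonneg hk, ⟨1, alphaF_le_one hk⟩,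
    1/(2*(k:ℝ)), by positivity, 1, ?_⟩
  filter_upwards [eventually_le_atBot (-1)] with x hx
  rw [alphaF_of_le hx, ← Real.exp_add]
  apply Real.exp_le_one_iff.2
  have hx2 : 0 ≤ x^2/(2*(k:ℝ)) := by positivity
  have : 1/(2*(k:ℝ)) * x^2 + -x^2/(k:ℝ) = -(x^2/(2*(k:ℝ))) := by field_simp; ring
  linarith [this.le, this.ge]

-- ramp function
lemma ramp_cont (a w : ℝ) (hw : w ≠ 0) :
    Continuous (fun x => min 1 (max 0 ((x - a)/w))) :=
  continuous_const.min (continuous_const.max ((continuous_id.sub continuous_const).div_const w))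

-- (c) upper bound on maxM
lemma maxM_upper {ηn : ℕ → Measure ℝ} {η : Measure ℝ}
    (hn : ∀ n, MemM2 (ηn n)) (hη : MemM2 η)
    (H : ∀ f : ℝ → ℝ, MemCd2 f →
      Tendsto (fun n => ∫ x, f x ∂(ηn n)) atTop (nhds (∫ x, f x ∂η)))
    {ε : ℝ} (hε : 0 < ε) :
    ∀ᶠ n in atTop, maxM (ηn n) ≤ maxM η + 2*ε := by
  set a : ℝ := maxM η + ε with ha
  set f : ℝ → ℝ := fun x => min 1 (max 0 ((x - a)/ε)) with hf
  have hfc : Continuous f := ramp_cont a ε hε.ne'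
  have hf0 : ∀ x, 0 ≤ f x := fun x => le_min zero_le_one (le_max_left _ _)
  have hf1 : ∀ x, f x ≤ 1 := fun x => min_le_left _ _
  have hfzero : ∀ x, x ≤ a → f x = 0 := by
    intro x hx
    have : (x - a)/ε ≤ 0 := by
      apply div_nonpos_of_nonpos_of_nonneg <;> linarith
    simp only [hf]
    rw [max_eq_left this, min_eq_right zero_le_one]
  have hfCd2 : MemCd2 f := by
    refine ⟨hfc, hf0, ⟨1, hf1⟩, 1, one_pos, 0, ?_⟩
    filter_upwards [eventually_le_atBot a] with x hx
    rw [hfzero x hx, mul_zero]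
  have hη0 : ∫ x, f x ∂η = 0 := by
    refine integral_eq_zero_of_ae ?_
    rw [Filter.EventuallyEq, ae_iff]
    refine measure_mono_null (fun x hx => ?_) (m2_Ici_zero_of_gt hη (show maxM η < a by
      simp only [ha]; linarith))
    simp only [mem_setOf_eq] at hx
    by_contra hxa
    exact hx (hfzero x (le_of_not_ge fun hc => hxa (mem_Ici.2 (by linarith))))
  have htend := H f hfCd2
  rw [hη0] at htend
  have hev := Filter.Tendsto.eventually_lt_const one_pos htend
  filter_upwards [hev] with n hn2
  have hfi : Integrable f (ηn n) := by
    refine integrable_of_m2 (hn n) hfc hf0 hf1 (lam := 1) (C := 1) (M := -a) one_pos ?_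
    intro x hx
    rw [hfzero x (by linarith)]
    positivity
  have hind : ((ηn n) (Ici (a+ε))).toReal ≤ ∫ x, f x ∂(ηn n) := by
    have hmono : ∀ x, (Ici (a+ε)).indicator (fun _ => (1:ℝ)) x ≤ f x := by
      intro x
      by_cases hx : x ∈ Ici (a+ε)
      · rw [indicator_of_mem hx]
        have : (1:ℝ) ≤ (x - a)/ε := (le_div_iff₀ hε).2 (by linarith [mem_Ici.1 hx])
        simp only [hf]
        rw [max_eq_right (by linarith), min_eq_left this]
      · rw [indicator_of_notMem hx]; exact hf0 x
    calc ((ηn n) (Ici (a+ε))).toReal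
        = ∫ x, (Ici (a+ε)).indicator (fun _ => (1:ℝ)) x ∂(ηn n) := by
          rw [integral_indicator_const _ measurableSet_Ici, smul_eq_mul, mul_one]; rfl
      _ ≤ ∫ x, f x ∂(ηn n) := integral_mono (m2_integrable_indicator (hn n) _) hfi hmono
  have hlt : (ηn n) (Ici (a+ε)) < 1 := by
    rw [← ENNReal.toReal_lt_toReal (m2_Ici_lt_top (hn n) _).ne (by simp : (1:ℝ≥0∞) ≠ ⊤)]
    simpa using lt_of_le_of_lt hind hn2
  have hzero := pm_Ici_eq_zero_of_lt_one (hn n).1 hlt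
  refine csSup_le (m2_S_nonempty (hn n)) fun x hx => ?_
  by_contra hc
  push_neg at hc
  refine hx (measure_mono_null (Ici_subset_Ici.2 ?_) hzero)
  simp only [ha] at hc ⊢
  linarith

-- (d) lower bound on maxM
lemma maxM_lower {ηn : ℕ → Measure ℝ} {η : Measure ℝ}
    (hn : ∀ n, MemM2 (ηn n)) (hη : MemM2 η)
    (H : ∀ f : ℝ → ℝ, MemCd2 f →
      Tendsto (fun n => ∫ x, f x ∂(ηn n)) atTop (nhds (∫ x, f x ∂η)))
    {ε : ℝ} (hε : 0 < ε) :
    ∀ᶠ n in atTop, maxM η - 2*ε ≤ maxM (ηn n) := by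
  set b : ℝ := maxM η with hb
  set h : ℝ → ℝ := fun x => max 0 (min 1 (2 - |x - b|/ε)) with hhdef
  have hhc : Continuous h := continuous_const.max (continuous_const.min
    (continuous_const.sub (((continuous_id.sub continuous_const).abs).div_const ε)))
  have hh0 : ∀ x, 0 ≤ h x := fun x => le_max_left _ _
  have hhzero : ∀ x, x ∉ Icc (b - 2*ε) (b + 2*ε) → h x = 0 := by
    intro x hx
    have habs : 2*ε < |x - b| := by
      rw [mem_Icc] at hx
      push_neg at hx
      rcases lt_or_ge x (b - 2*ε) with h1 | h1
      · rw [abs_of_neg (by linarith : x - b < 0)]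
        linarith
      · have := hx h1
        rw [abs_of_pos (by linarith : (0:ℝ) < x - b)]
        linarith
    have ht : 2 - |x - b|/ε ≤ 0 := by
      rw [sub_nonpos, le_div_iff₀ hε]
      linarith
    simp only [hhdef]
    rw [max_eq_left (le_trans (min_le_right _ _) ht)]
  have hhsupp : HasCompactSupport h :=
    HasCompactSupport.intro isCompact_Icc hhzero
  have hhone : ∀ x, x ∈ Icc (b - ε) (b + ε) → h x = 1 := by
    intro x hx
    rw [mem_Icc] at hx
    have habs : |x - b| ≤ ε := abs_le.2 ⟨by linarith, by linarith⟩
    have : (1:ℝ) ≤ 2 - |x - b|/ε := by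
      have hd : |x - b|/ε ≤ 1 := (div_le_one hε).2 habs
      linarith
    simp only [hhdef]
    rw [min_eq_left this, max_eq_right zero_le_one]
  have hIccMeas : η (Icc (b - ε) (b + ε)) < ⊤ := pm_Icc_lt_top hη.1 _ _
  have hge1 : 1 ≤ η (Icc (b - ε) (b + ε)) := by
    have h1 : 1 ≤ η (Ici (b - ε)) := m2_one_le_Ici_of_lt hη (by simp only [hb]; linarith)
    have h2 : η (Ici (b - ε)) ≤ η (Icc (b - ε) (b + ε)) + η (Ioi (b + ε)) := by
      refine le_trans (measure_mono ?_) (measure_union_le _ _)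
      intro y hy
      rcases le_or_gt y (b + ε) with h3 | h3
      · exact Or.inl ⟨mem_Ici.1 hy, h3⟩
      · exact Or.inr h3
    have h3 : η (Ioi (b + ε)) = 0 :=
      measure_mono_null (Ioi_subset_Ioi (by linarith)) (m2_Ioi_maxM_zero hη)
    rw [h3, add_zero] at h2
    exact le_trans h1 h2
  have hint1 : (1:ℝ) ≤ ∫ x, h x ∂η := by
    have hmono : ∀ x, (Icc (b - ε) (b + ε)).indicator (fun _ => (1:ℝ)) x ≤ h x := by
      intro x
      by_cases hx : x ∈ Icc (b - ε) (b + ε)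
      · rw [indicator_of_mem hx, hhone x hx]
      · rw [indicator_of_notMem hx]; exact hh0 x
    have hiind : Integrable ((Icc (b - ε) (b + ε)).indicator fun _ => (1:ℝ)) η := by
      rw [integrable_indicator_iff measurableSet_Icc]
      exact integrableOn_const hIccMeas.ne
    haveI := m2_finiteOnCompacts hη
    have hhi : Integrable h η := hhc.integrable_of_hasCompactSupport hhsupp
    calc (1:ℝ) = ((1:ℝ≥0∞)).toReal := by simp
      _ ≤ (η (Icc (b - ε) (b + ε))).toReal :=
          (ENNReal.toReal_le_toReal (by simp) hIccMeas.ne).2 hge1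
      _ = ∫ x, (Icc (b - ε) (b + ε)).indicator (fun _ => (1:ℝ)) x ∂η := by
          rw [integral_indicator_const _ measurableSet_Icc, smul_eq_mul, mul_one]; rfl
      _ ≤ ∫ x, h x ∂η := integral_mono hiind hhi hmono
  have htend := H h (memCd2_of_compactSupport hhc hhsupp hh0)
  have hev := Filter.Tendsto.eventually_const_lt
    (show (1:ℝ)/2 < ∫ x, h x ∂η by linarith) htend
  filter_upwards [hev] with n hn2
  have hne : (ηn n) (Ici (b - 2*ε)) ≠ 0 := by
    intro h0
    have hae : h =ᵐ[ηn n] 0 := by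
      rw [Filter.EventuallyEq, ae_iff]
      refine measure_mono_null (fun x hx => ?_) h0
      simp only [mem_setOf_eq] at hx
      by_contra hxa
      refine hx (hhzero x fun hmem => hxa ?_)
      exact mem_Ici.2 hmem.1
    rw [integral_congr_ae hae] at hn2
    simp at hn2
    linarith
  exact le_csSup (m2_S_bddAbove (hn n)) hne


-- simple ramps of width 1
def rmp (a x : ℝ) : ℝ := min 1 (max 0 (x - a))
def rmpd (a x : ℝ) : ℝ := min 1 (max 0 (a - x))

lemma rmp_cont (a : ℝ) : Continuous (rmp a) :=
  continuous_const.min (continuous_const.max (continuous_id.sub continuous_const))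
lemma rmpd_cont (a : ℝ) : Continuous (rmpd a) :=
  continuous_const.min (continuous_const.max (continuous_const.sub continuous_id))
lemma rmp_nonneg (a x : ℝ) : 0 ≤ rmp a x := le_min zero_le_one (le_max_left _ _)
lemma rmpd_nonneg (a x : ℝ) : 0 ≤ rmpd a x := le_min zero_le_one (le_max_left _ _)
lemma rmp_le_one (a x : ℝ) : rmp a x ≤ 1 := min_le_left _ _
lemma rmpd_le_one (a x : ℝ) : rmpd a x ≤ 1 := min_le_left _ _
lemma rmp_eq_zero {a x : ℝ} (h : x ≤ a) : rmp a x = 0 := by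
  rw [rmp, max_eq_left (by linarith), min_eq_right zero_le_one]
lemma rmp_eq_one {a x : ℝ} (h : a + 1 ≤ x) : rmp a x = 1 := by
  rw [rmp, min_eq_left (le_max_of_le_right (by linarith))]
lemma rmpd_eq_zero {a x : ℝ} (h : a ≤ x) : rmpd a x = 0 := by
  rw [rmpd, max_eq_left (by linarith), min_eq_right zero_le_one]
lemma rmpd_eq_one {a x : ℝ} (h : x ≤ a - 1) : rmpd a x = 1 := by
  rw [rmpd, min_eq_left (le_max_of_le_right (by linarith))]

lemma alphaF_of_nonneg {k : ℕ} {x : ℝ} (h : 0 ≤ x) : alphaF k x = 0 := by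
  rw [alphaF, if_neg (by linarith), if_neg (by linarith)]



set_option maxHeartbeats 1000000 in
lemma forward_dir {ηn : ℕ → Measure ℝ} {η : Measure ℝ}
    (hn : ∀ n, MemM2 (ηn n)) (hη : MemM2 η) (hD : D2Tendsto ηn η)
    {f : ℝ → ℝ} (hf : MemCd2 f) :
    Tendsto (fun n => ∫ x, f x ∂(ηn n)) atTop (nhds (∫ x, f x ∂η)) := by
  obtain ⟨hvague, hmax, halpha⟩ := hD
  obtain ⟨hfc, hf0, ⟨Cb, hCb⟩, lam, hlam, C0, hC0⟩ := hf
  obtain ⟨M0, hM0⟩ := eventually_atBot.1 hC0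
  set C : ℝ := max C0 0 with hCdef
  have hC0' : 0 ≤ C := le_max_right _ _
  have htail : ∀ x, x ≤ M0 → f x ≤ C * Real.exp (-lam * x^2) := by
    intro x hx
    have h1 := hM0 x hx
    have h2 : f x = Real.exp (-(lam * x^2)) * (Real.exp (lam * x^2) * f x) := by
      rw [← mul_assoc, ← Real.exp_add]
      simp
    have h3 : f x ≤ Real.exp (-(lam * x^2)) * C0 := by
      rw [h2]
      exact mul_le_mul_of_nonneg_left h1 (Real.exp_nonneg _)
    have h4 : Real.exp (-(lam * x^2)) * C0 ≤ C * Real.exp (-lam * x^2) := by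
      rw [show -(lam * x^2) = -lam * x^2 by ring, mul_comm]
      exact mul_le_mul_of_nonneg_right (le_max_left _ _) (Real.exp_nonneg _)
    linarith
  have hfiη : Integrable f η :=
    integrable_of_m2 hη hfc hf0 hCb (M := -M0) hlam fun x hx => htail x (by linarith)
  have hfin : ∀ n, Integrable f (ηn n) := fun n =>
    integrable_of_m2 (hn n) hfc hf0 hCb (M := -M0) hlam fun x hx => htail x (by linarith)
  -- choose k
  set k : ℕ := max 1 ⌈1/lam⌉₊ with hkdef
  have hk1 : 1 ≤ k := le_max_left _ _
  have hkpos : (0:ℝ) < k := by exact_mod_cast hk1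
  have hklam : 1/(k:ℝ) ≤ lam := by
    have h1 : 1/lam ≤ (⌈1/lam⌉₊ : ℝ) := Nat.le_ceil _
    have h2 : ((⌈1/lam⌉₊:ℕ) : ℝ) ≤ (k:ℝ) := by exact_mod_cast le_max_right 1 ⌈1/lam⌉₊
    rw [div_le_iff₀ hkpos]
    rw [div_le_iff₀ hlam] at h1
    nlinarith
  have hαη : Integrable (alphaF k) η := alphaF_integrable hη hk1
  have hαn : ∀ n, Integrable (alphaF k) (ηn n) := fun n => alphaF_integrable (hn n) hk1
  -- comparison with alphaF
  set M : ℝ := max (-M0) 1 with hMdef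
  have hcomp : ∀ x, x ≤ -M → f x ≤ C * alphaF k x := by
    intro x hx
    have hx1 : x ≤ -1 := le_trans hx (by simp only [hMdef]; have := le_max_right (-M0) 1; linarith)
    have hx0 : x ≤ M0 := le_trans hx (by simp only [hMdef]; have := le_max_left (-M0) 1; linarith)
    rw [alphaF_of_le hx1]
    refine le_trans (htail x hx0) (mul_le_mul_of_nonneg_left ?_ hC0')
    apply Real.exp_le_exp.2
    have hsq : (0:ℝ) ≤ x^2 := sq_nonneg x
    have : x^2/(k:ℝ) = (1/(k:ℝ)) * x^2 := by ring
    rw [neg_div, this]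
    nlinarith
  -- main estimate
  rw [Metric.tendsto_nhds]
  intro ε hε
  set A : ℝ := maxM η + 1 with hAdef
  have hAgt : maxM η < A := by simp only [hAdef]; linarith
  have hηA : η (Ioi A) = 0 :=
    measure_mono_null Ioi_subset_Ici_self (m2_Ici_zero_of_gt hη hAgt)
  have hevA : ∀ᶠ n in atTop, (ηn n) (Ioi A) = 0 := by
    filter_upwards [Filter.Tendsto.eventually_lt_const hAgt hmax] with n hn2
    exact measure_mono_null Ioi_subset_Ici_self (m2_Ici_zero_of_gt (hn n) hn2)
  set δ : ℝ := ε/(8*(C+1)) with hδdef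
  have hδpos : 0 < δ := by positivity
  -- choose R
  have htailf := Metric.tendsto_nhds.1 (m2_tendsto_tail hη hfiη) (ε/8) (by positivity)
  have htailα := Metric.tendsto_nhds.1 (m2_tendsto_tail hη hαη) δ hδpos
  obtain ⟨R, hRf, hRα, hRM⟩ :
      ∃ R : ℕ, dist (∫ x in Iic (-(R:ℝ)), f x ∂η) 0 < ε/8 ∧
        dist (∫ x in Iic (-(R:ℝ)), alphaF k x ∂η) 0 < δ ∧ M ≤ (R:ℝ) := by
    have h3 : ∀ᶠ R : ℕ in atTop, M ≤ (R:ℝ) := by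
      obtain ⟨N, hN⟩ := exists_nat_ge M
      filter_upwards [eventually_ge_atTop N] with m hm
      have : (N:ℝ) ≤ m := by exact_mod_cast hm
      linarith
    exact ((htailf.and htailα).and h3).exists.imp fun R hR => ⟨hR.1.1, hR.1.2, hR.2⟩
  rw [Real.dist_eq, sub_zero] at hRf hRα
  have hRf' : ∫ x in Iic (-(R:ℝ)), f x ∂η < ε/8 := lt_of_abs_lt hRf
  have hRα' : ∫ x in Iic (-(R:ℝ)), alphaF k x ∂η < δ := lt_of_abs_lt hRα
  -- test functions
  set ψ : ℝ → ℝ := rmp (-(R:ℝ)-1) with hψdef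
  set h1 : ℝ → ℝ := fun x => alphaF k x * ψ x with hh1def
  set χ : ℝ → ℝ := fun x => rmp (-(R:ℝ)-2) x * rmpd (A+1) x with hχdef
  set h2 : ℝ → ℝ := fun x => f x * χ x with hh2def
  have hχ01 : ∀ x, 0 ≤ χ x ∧ χ x ≤ 1 := fun x =>
    ⟨mul_nonneg (rmp_nonneg _ _) (rmpd_nonneg _ _),
     mul_le_one₀ (rmp_le_one _ _) (rmpd_nonneg _ _) (rmpd_le_one _ _)⟩
  have hχone : ∀ x, -(R:ℝ)-1 ≤ x → x ≤ A → χ x = 1 := by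
    intro x hx1 hx2
    simp only [hχdef]
    rw [rmp_eq_one (by linarith), rmpd_eq_one (by linarith), mul_one]
  have hh1c : Continuous h1 := (alphaF_continuous hk1).mul (rmp_cont _)
  have hh1supp : HasCompactSupport h1 := by
    refine HasCompactSupport.intro (isCompact_Icc (a := -(R:ℝ)-1) (b := 0)) ?_
    intro x hx
    rw [mem_Icc] at hx
    push_neg at hx
    simp only [hh1def]
    rcases lt_or_ge x (-(R:ℝ)-1) with h | h
    · rw [hψdef, rmp_eq_zero h.le, mul_zero]
    · rw [alphaF_of_nonneg (hx h).le, zero_mul]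
  have hh1nn : ∀ x, 0 ≤ h1 x := fun x => mul_nonneg (alphaF_nonneg hk1 x) (rmp_nonneg _ _)
  have hh2c : Continuous h2 := hfc.mul ((rmp_cont _).mul (rmpd_cont _))
  have hh2supp : HasCompactSupport h2 := by
    refine HasCompactSupport.intro (isCompact_Icc (a := -(R:ℝ)-2) (b := A+1)) ?_
    intro x hx
    rw [mem_Icc] at hx
    push_neg at hx
    simp only [hh2def, hχdef]
    rcases lt_or_ge x (-(R:ℝ)-2) with h | h
    · rw [rmp_eq_zero h.le, zero_mul, mul_zero]
    · rw [rmpd_eq_zero (hx h).le, mul_zero, mul_zero]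
  have hh2nn : ∀ x, 0 ≤ h2 x := fun x => mul_nonneg (hf0 x) (hχ01 x).1
  -- integrabilities of products
  have hh1i : ∀ μ : Measure ℝ, Integrable (alphaF k) μ → Integrable h1 μ := by
    intro μ hi
    refine hi.mono' (hh1c.aestronglyMeasurable) (Eventually.of_forall fun x => ?_)
    rw [Real.norm_eq_abs, abs_of_nonneg (hh1nn x)]
    simpa using mul_le_of_le_one_right (alphaF_nonneg hk1 x) (rmp_le_one _ _)
  have hh2i : ∀ μ : Measure ℝ, Integrable f μ → Integrable h2 μ := by
    intro μ hi
    refine hi.mono' (hh2c.aestronglyMeasurable) (Eventually.of_forall fun x => ?_)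
    rw [Real.norm_eq_abs, abs_of_nonneg (hh2nn x)]
    simpa using mul_le_of_le_one_right (hf0 x) (hχ01 x).2
  -- key bound on f-tail
  have key : ∀ μ : Measure ℝ, MemM2 μ → μ (Ioi A) = 0 → Integrable f μ →
      0 ≤ (∫ x, f x ∂μ) - (∫ x, h2 x ∂μ) ∧
      (∫ x, f x ∂μ) - (∫ x, h2 x ∂μ) ≤ ∫ x in Iic (-(R:ℝ)-1), f x ∂μ := by
    intro μ hμ hμA hfi
    have hdiff : (∫ x, f x ∂μ) - (∫ x, h2 x ∂μ) = ∫ x, (f x - h2 x) ∂μ :=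
      (integral_sub hfi (hh2i μ hfi)).symm
    constructor
    · rw [hdiff]
      refine integral_nonneg fun x => ?_
      show (0:ℝ) ≤ f x - h2 x
      simp only [hh2def]
      have := mul_le_of_le_one_right (hf0 x) (hχ01 x).2
      linarith
    · rw [hdiff]
      have hptw : ∀ x, f x - h2 x ≤
          (Iic (-(R:ℝ)-1)).indicator f x + (Ioi A).indicator f x := by
        intro x
        have hind1 : 0 ≤ (Iic (-(R:ℝ)-1)).indicator f x := indicator_nonneg (fun y _ => hf0 y) x
        have hind2 : 0 ≤ (Ioi A).indicator f x := indicator_nonneg (fun y _ => hf0 y) x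
        rcases le_or_gt x (-(R:ℝ)-1) with h | h
        · have he : (Iic (-(R:ℝ)-1)).indicator f x = f x := indicator_of_mem (mem_Iic.2 h) f
          have hp : 0 ≤ f x * χ x := mul_nonneg (hf0 x) (hχ01 x).1
          simp only [hh2def]
          linarith
        · rcases le_or_gt x A with hA2 | hA2
          · have he : h2 x = f x := by
              simp only [hh2def]
              rw [hχone x h.le hA2, mul_one]
            linarith
          · have he : (Ioi A).indicator f x = f x := indicator_of_mem (mem_Ioi.2 hA2) f
            have hp : 0 ≤ f x * χ x := mul_nonneg (hf0 x) (hχ01 x).1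
            simp only [hh2def]
            linarith
      have hint1 : Integrable ((Iic (-(R:ℝ)-1)).indicator f) μ :=
        hfi.indicator measurableSet_Iic
      have hint2 : Integrable ((Ioi A).indicator f) μ := hfi.indicator measurableSet_Ioi
      calc ∫ x, (f x - h2 x) ∂μ
          ≤ ∫ x, ((Iic (-(R:ℝ)-1)).indicator f x + (Ioi A).indicator f x) ∂μ :=
            integral_mono (hfi.sub (hh2i μ hfi)) (hint1.add hint2) hptw
        _ = (∫ x in Iic (-(R:ℝ)-1), f x ∂μ) + ∫ x in Ioi A, f x ∂μ := by
            rw [integral_add hint1 hint2, integral_indicator measurableSet_Iic,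
              integral_indicator measurableSet_Ioi]
        _ = ∫ x in Iic (-(R:ℝ)-1), f x ∂μ := by
            rw [Measure.restrict_eq_zero.2 hμA, integral_zero_measure, add_zero]
  -- α-tail bounds
  have keyα : ∀ μ : Measure ℝ, Integrable (alphaF k) μ →
      ∫ x in Iic (-(R:ℝ)-1), alphaF k x ∂μ ≤
        (∫ x, alphaF k x ∂μ) - ∫ x, h1 x ∂μ := by
    intro μ hi
    have hdiff : (∫ x, alphaF k x ∂μ) - (∫ x, h1 x ∂μ) = ∫ x, (alphaF k x - h1 x) ∂μ :=
      (integral_sub hi (hh1i μ hi)).symm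
    rw [hdiff]
    have hie : ∫ x in Iic (-(R:ℝ)-1), alphaF k x ∂μ =
        ∫ x, (Iic (-(R:ℝ)-1)).indicator (alphaF k) x ∂μ :=
      (integral_indicator measurableSet_Iic).symm
    rw [hie]
    refine integral_mono (hi.indicator measurableSet_Iic) (hi.sub (hh1i μ hi)) fun x => ?_
    rcases le_or_gt x (-(R:ℝ)-1) with h | h
    · rw [indicator_of_mem (mem_Iic.2 h)]
      simp only [hh1def, hψdef]
      rw [rmp_eq_zero h, mul_zero]
      linarith
    · rw [indicator_of_notMem (by simpa using h)]
      simp only [hh1def]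
      nlinarith [alphaF_nonneg hk1 x, rmp_le_one (-(R:ℝ)-1) x, rmp_nonneg (-(R:ℝ)-1) x]
  have keyαη : (∫ x, alphaF k x ∂η) - (∫ x, h1 x ∂η) ≤ ∫ x in Iic (-(R:ℝ)), alphaF k x ∂η := by
    have hdiff : (∫ x, alphaF k x ∂η) - (∫ x, h1 x ∂η) = ∫ x, (alphaF k x - h1 x) ∂η :=
      (integral_sub hαη (hh1i η hαη)).symm
    rw [hdiff]
    have hie : ∫ x in Iic (-(R:ℝ)), alphaF k x ∂η =
        ∫ x, (Iic (-(R:ℝ))).indicator (alphaF k) x ∂η :=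
      (integral_indicator measurableSet_Iic).symm
    rw [hie]
    refine integral_mono (hαη.sub (hh1i η hαη)) (hαη.indicator measurableSet_Iic) fun x => ?_
    rcases le_or_gt x (-(R:ℝ)) with h | h
    · rw [indicator_of_mem (mem_Iic.2 h)]
      simp only [hh1def]
      nlinarith [alphaF_nonneg hk1 x, rmp_nonneg (-(R:ℝ)-1) x, rmp_le_one (-(R:ℝ)-1) x]
    · rw [indicator_of_notMem (by simpa using h)]
      simp only [hh1def, hψdef]
      rw [rmp_eq_one (by linarith)]
      simp
  -- convergences
  have hJ := hvague h2 hh2c hh2supp hh2nn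
  have hK : Tendsto (fun n => (∫ x, alphaF k x ∂(ηn n)) - ∫ x, h1 x ∂(ηn n)) atTop
      (nhds ((∫ x, alphaF k x ∂η) - ∫ x, h1 x ∂η)) :=
    (halpha k hk1).sub (hvague h1 hh1c hh1supp hh1nn)
  have hKlt : (∫ x, alphaF k x ∂η) - (∫ x, h1 x ∂η) < δ := lt_of_le_of_lt keyαη hRα'
  have hevK := Filter.Tendsto.eventually_lt_const hKlt hK
  have hevJ := Metric.tendsto_nhds.1 hJ (ε/8) (by positivity)
  -- finish
  filter_upwards [hevA, hevK, hevJ] with n hnA hnK hnJ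
  obtain ⟨hη1, hη2⟩ := key η hη hηA hfiη
  obtain ⟨hn1, hn2⟩ := key (ηn n) (hn n) hnA (hfin n)
  have hη3 : (∫ x, f x ∂η) - (∫ x, h2 x ∂η) < ε/8 := by
    refine lt_of_le_of_lt hη2 (lt_of_le_of_lt ?_ hRf')
    refine setIntegral_mono_set hfiη.integrableOn (Eventually.of_forall hf0)
      (Eventually.of_forall ?_)
    intro x hx
    exact le_trans hx (by linarith)
  have hn3 : (∫ x, f x ∂(ηn n)) - (∫ x, h2 x ∂(ηn n)) ≤ C * δ := by
    refine le_trans hn2 ?_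
    have hs1 : ∫ x in Iic (-(R:ℝ)-1), f x ∂(ηn n) ≤
        ∫ x in Iic (-(R:ℝ)-1), C * alphaF k x ∂(ηn n) := by
      refine setIntegral_mono_on (hfin n).integrableOn
        (((hαn n).const_mul C).integrableOn) measurableSet_Iic fun x hx => ?_
      refine hcomp x (le_trans (mem_Iic.1 hx) ?_)
      linarith
    have hs2 : ∫ x in Iic (-(R:ℝ)-1), C * alphaF k x ∂(ηn n) =
        C * ∫ x in Iic (-(R:ℝ)-1), alphaF k x ∂(ηn n) := integral_const_mul C _
    have hs3 : ∫ x in Iic (-(R:ℝ)-1), alphaF k x ∂(ηn n) ≤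
        (∫ x, alphaF k x ∂(ηn n)) - ∫ x, h1 x ∂(ηn n) := keyα (ηn n) (hαn n)
    calc ∫ x in Iic (-(R:ℝ)-1), f x ∂(ηn n)
        ≤ C * ∫ x in Iic (-(R:ℝ)-1), alphaF k x ∂(ηn n) := by rw [← hs2]; exact hs1
      _ ≤ C * ((∫ x, alphaF k x ∂(ηn n)) - ∫ x, h1 x ∂(ηn n)) :=
          mul_le_mul_of_nonneg_left hs3 hC0'
      _ ≤ C * δ := mul_le_mul_of_nonneg_left hnK.le hC0'
  have hCδ : C * δ ≤ ε/8 := by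
    have h1 : C * δ ≤ (C+1) * δ := by nlinarith
    have h2 : (C+1) * δ = ε/8 := by
      simp only [hδdef]
      field_simp
    linarith
  rw [Real.dist_eq] at hnJ ⊢
  have habs := abs_lt.1 hnJ
  rw [abs_lt]
  constructor <;> nlinarith


lemma backward_dir {ηn : ℕ → Measure ℝ} {η : Measure ℝ}
    (hn : ∀ n, MemM2 (ηn n)) (hη : MemM2 η)
    (H : ∀ f : ℝ → ℝ, MemCd2 f →
      Tendsto (fun n => ∫ x, f x ∂(ηn n)) atTop (nhds (∫ x, f x ∂η))) :
    D2Tendsto ηn η := by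
  refine ⟨fun h hc hs h0 => H h (memCd2_of_compactSupport hc hs h0), ?_,
    fun k hk => H _ (memCd2_alphaF hk)⟩
  rw [Metric.tendsto_nhds]
  intro ε hε
  have h5 : (0:ℝ) < ε/5 := by linarith
  filter_upwards [maxM_upper hn hη H h5, maxM_lower hn hη H h5] with n h1 h2
  rw [Real.dist_eq, abs_lt]
  constructor <;> linarith


/-- Lemma 3.2: `d₂`-convergence in `𝓜₂` is equivalent to convergence of the integrals of all
test functions in `C_{d₂}⁺(ℝ)`. -/
theorem d2_convergence_iff_Cd2
    (ηn : ℕ → Measure ℝ) (η : Measure ℝ)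
    (hn : ∀ n, MemM2 (ηn n)) (hη : MemM2 η) :
    D2Tendsto ηn η ↔
      ∀ f : ℝ → ℝ, MemCd2 f →
        Tendsto (fun n => ∫ x, f x ∂(ηn n)) atTop (nhds (∫ x, f x ∂η)) :=
  ⟨fun hD f hf => forward_dir hn hη hD hf, fun H => backward_dir hn hη H⟩

end
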